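/- Let (σ_k) be nonincreasing with σ_k > 0 and suppose 8 t_k² L_k² ≤ 1 for all k ≥ 1. With D₁ := 0, the energy inequality E_{k+1}(z) + D_{k+1} ≤ E_k(z) + D_k − t_k Ψ_k(z) − ¼‖z^{k+1/2} − z^k‖² holds for the optimistic extragradient iterates, for all k ≥ 1 and all z ∈ Z (in particular also for k = 1, using z^{1/2} = z¹). -/
import Mathlib


noncomputable section

open scoped RealInnerProductSpace
open Filter Topology

variable {Z : Type*} [NormedAddCommGroup Z] [InnerProductSpace ℝ Z] [CompleteSpace Z]

/-- Effective domain of an extended-real-valued function. -/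
def edom {Z : Type*} (g : Z → EReal) : Set Z := {z | g z < ⊤}

/-- `g` is proper, convex and lower semicontinuous. -/
structure ProperConvexLsc (g : Z → EReal) : Prop where
  ne_bot : ∀ z, g z ≠ ⊥
  proper : ∃ z, g z < ⊤
  convex : ∀ x y : Z, ∀ a b : ℝ, 0 ≤ a → 0 ≤ b → a + b = 1 →
    g (a • x + b • y) ≤ (a : EReal) * g x + (b : EReal) * g y
  lsc : LowerSemicontinuous g

/-- Monotonicity of an operator on a real Hilbert space. -/
def IsMonotoneOp (F : Z → Z) : Prop := ∀ x y : Z, 0 ≤ ⟪F x - F y, x - y⟫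

/-- Lipschitz continuity with (real) constant `L`. -/
def IsLipOp (L : ℝ) (F : Z → Z) : Prop := ∀ x y : Z, ‖F x - F y‖ ≤ L * ‖x - y‖

/-- The bifunction `H^{(F,g)}(z,y) = ⟪F y, z - y⟫ + g z - g y`. -/
def Hb (F : Z → Z) (g : Z → EReal) (z y : Z) : EReal :=
  ((⟪F y, z - y⟫ : ℝ) : EReal) + g z - g y

/-- The localized dual gap function `Θ(z | F,g,C)`. -/
def gapFn (F : Z → Z) (g : Z → EReal) (C : Set Z) (z : Z) : EReal :=
  ⨆ y ∈ C, Hb F g z y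

/-- The convex subdifferential of an extended-real-valued function. -/
def subdiff (g : Z → EReal) (x : Z) : Set Z :=
  {ξ : Z | ∀ y : Z, ((⟪ξ, y - x⟫ : ℝ) : EReal) + g x ≤ g y}

/-- The solution set `zer(F + ∂g)`. -/
def zerFg (F : Z → Z) (g : Z → EReal) : Set Z := {z : Z | -F z ∈ subdiff g z}

/-- The normal cone to a set `C` at `z`. -/
def normalCone (C : Set Z) (z : Z) : Set Z :=
  {ξ : Z | z ∈ C ∧ ∀ z' ∈ C, ⟪ξ, z' - z⟫ ≤ 0}

/-- The solution set `zer(F + ∂g + N_C)`. -/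
def zerFgN (F : Z → Z) (g : Z → EReal) (C : Set Z) : Set Z :=
  {z : Z | ∃ ξ ∈ subdiff g z, ∃ p ∈ normalCone C z, F z + ξ + p = 0}

/-- The solution set `S₁` of problem (P): points of `S₂` solving the upper HVI over `S₂`. -/
def solP (F₁ : Z → Z) (g₁ : Z → EReal) (S₂ : Set Z) : Set Z :=
  {zs : Z | zs ∈ S₂ ∧ ∀ u ∈ S₂, 0 ≤ Hb F₁ g₁ u zs}

/-- `(α,ρ)`-weak sharpness of the solution set `S` of `HVI(F,g)`. -/
def WeakSharp (F : Z → Z) (g : Z → EReal) (S : Set Z) (α ρ : ℝ) : Prop :=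
  ∀ zs ∈ S, ∀ z ∈ edom g,
    (((α / ρ) * Metric.infDist z S ^ ρ : ℝ) : EReal) ≤ Hb F g z zs

/-- Support function of a set. -/
def suppFn (p : Z) (C : Set Z) : EReal := ⨆ z ∈ C, ((⟪p, z⟫ : ℝ) : EReal)

/-- The Fitzpatrick-type function `φ^{(F,g)}(z,u)`. -/
def phiFn (F : Z → Z) (g : Z → EReal) (z u : Z) : EReal :=
  ⨆ y ∈ edom g, (Hb F g z y + ((⟪y, u⟫ : ℝ) : EReal))

/-- `x = prox_{τ G}(u)`, via the variational characterization
`⟪u - x, v - x⟫ ≤ τ (G v - G x)` for all `v`. -/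
def IsProx (τ : ℝ) (G : Z → EReal) (u x : Z) : Prop :=
  ∀ v : Z, ((⟪u - x, v - x⟫ : ℝ) : EReal) ≤ (τ : EReal) * (G v - G x)

/-- The Tikhonov-regularized operator `V_k = F₂ + σ_k F₁`. -/
def Vop (F₁ F₂ : Z → Z) (σ : ℕ → ℝ) (k : ℕ) (x : Z) : Z := F₂ x + σ k • F₁ x

/-- The Tikhonov-regularized function `G_k = g₂ + σ_k g₁`. -/
def Gfun (g₁ g₂ : Z → EReal) (σ : ℕ → ℝ) (k : ℕ) (v : Z) : EReal :=
  g₂ v + ((σ k : ℝ) : EReal) * g₁ v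

/-- The Attouch–Czarnecki summability condition. -/
def ACcond (F₂ : Z → Z) (g₂ : Z → EReal) (S₂ : Set Z) (t σ : ℕ → ℝ) : Prop :=
  ∀ p : Z, (∃ zs : Z, p ∈ normalCone S₂ zs) →
    ∃ M : ℝ, ∀ K : ℕ,
      (∑ k ∈ Finset.Icc 1 K,
        ((t k : ℝ) : EReal) * ((⨆ zs ∈ S₂, phiFn F₂ g₂ zs (σ k • p)) - suppFn (σ k • p) S₂))
        ≤ (M : EReal)

/-- `T_K = ∑_{k=1}^K t_k`. -/
def Tsum (t : ℕ → ℝ) (K : ℕ) : ℝ := ∑ k ∈ Finset.Icc 1 K, t k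

/-- The ergodic average `z̄^K` (here `w k` plays the role of `z^{k+1/2}`). -/
def zbar (t : ℕ → ℝ) (w : ℕ → Z) (K : ℕ) : Z :=
  (Tsum t K)⁻¹ • ∑ k ∈ Finset.Icc 1 K, t k • w k

/-- Weights `γ_k = 1/∏_{i=1}^k (1 - t_i σ_i μ)` (so `γ_0 = 1`). -/
def gammaW (t σ : ℕ → ℝ) (μ : ℝ) (k : ℕ) : ℝ :=
  (∏ i ∈ Finset.Icc 1 k, (1 - t i * σ i * μ))⁻¹

/-- The weighted ergodic average used in the strongly monotone case. -/
def zbarW (t σ : ℕ → ℝ) (μ : ℝ) (w : ℕ → Z) (K : ℕ) : Z :=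
  (∑ i ∈ Finset.Icc 1 K, t i * σ i * gammaW t σ μ i)⁻¹ •
    ∑ i ∈ Finset.Icc 1 K, (t i * σ i * gammaW t σ μ i) • w i

/-- Convex tangent cone `T_C(x) = cl(⋃_{λ>0} (C - x)/λ)`. -/
def tangentConeCvx (C : Set Z) (x : Z) : Set Z :=
  closure {v : Z | ∃ lam : ℝ, 0 < lam ∧ ∃ c ∈ C, v = lam⁻¹ • (c - x)}

/-- Polar cone of a set. -/
def polarCone (K : Set Z) : Set Z := {z : Z | ∀ x ∈ K, ⟪z, x⟫ ≤ 0}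


/-- From the prox characterization, the prox point has value `< ⊤` provided `G` takes
a real value somewhere. -/
lemma isProx_ne_top {Z : Type*} [NormedAddCommGroup Z] [InnerProductSpace ℝ Z]
    {τ : ℝ} (hτ : 0 < τ) {G : Z → EReal} {u x v₀ : Z} {c₀ : ℝ}
    (h0 : G v₀ = (c₀ : EReal)) (hx : IsProx τ G u x) : G x ≠ ⊤ := by
  intro hTop
  have h := hx v₀
  rw [h0, hTop] at h
  have h1 : (c₀ : EReal) - ⊤ = ⊥ := by
    rw [sub_eq_add_neg]; simp
  rw [h1, EReal.mul_bot_of_pos (by exact_mod_cast hτ : (0 : EReal) < (τ : ℝ))] at h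
  exact (EReal.coe_ne_bot _) (le_bot_iff.mp h)

/-- Real form of the prox inequality when the relevant values are finite. -/
lemma isProx_real_ineq {Z : Type*} [NormedAddCommGroup Z] [InnerProductSpace ℝ Z]
    {τ : ℝ} {G : Z → EReal} {u x v : Z} {a b : ℝ}
    (hx : IsProx τ G u x) (hGx : G x = (b : EReal)) (hGv : G v = (a : EReal)) :
    ⟪u - x, v - x⟫ ≤ τ * (a - b) := by
  have h := hx v
  rw [hGv, hGx, ← EReal.coe_sub, ← EReal.coe_mul] at h
  exact_mod_cast h

/-- Nonexpansiveness of the prox map (given finiteness of the values). -/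
lemma isProx_nonexpansive {Z : Type*} [NormedAddCommGroup Z] [InnerProductSpace ℝ Z]
    {τ : ℝ} {G : Z → EReal} {u₁ u₂ x₁ x₂ : Z} {b₁ b₂ : ℝ}
    (h1 : IsProx τ G u₁ x₁) (h2 : IsProx τ G u₂ x₂)
    (hb1 : G x₁ = (b₁ : EReal)) (hb2 : G x₂ = (b₂ : EReal)) :
    ‖x₁ - x₂‖ ≤ ‖u₁ - u₂‖ := by
  have ha := isProx_real_ineq h1 hb1 hb2
  have hb := isProx_real_ineq h2 hb2 hb1
  have hkey : ‖x₁ - x₂‖ ^ 2 ≤ ⟪u₁ - u₂, x₁ - x₂⟫ := by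
    have e1 : ⟪u₁ - x₁, x₂ - x₁⟫ + ⟪u₂ - x₂, x₁ - x₂⟫
        = ⟪u₂ - u₁, x₁ - x₂⟫ + ⟪x₁ - x₂, x₁ - x₂⟫ := by
      simp only [inner_sub_left, inner_sub_right]
      ring
    have e2 : ⟪u₂ - u₁, x₁ - x₂⟫ = -⟪u₁ - u₂, x₁ - x₂⟫ := by
      simp only [inner_sub_left]; ring
    have e3 : ⟪x₁ - x₂, x₁ - x₂⟫ = ‖x₁ - x₂‖ ^ 2 := real_inner_self_eq_norm_sq _
    nlinarith [ha, hb]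
  have hcs : ⟪u₁ - u₂, x₁ - x₂⟫ ≤ ‖u₁ - u₂‖ * ‖x₁ - x₂‖ := real_inner_le_norm _ _
  by_cases hz : ‖x₁ - x₂‖ = 0
  · rw [hz]; exact norm_nonneg _
  · have hpos : 0 < ‖x₁ - x₂‖ := lt_of_le_of_ne (norm_nonneg _) (Ne.symm hz)
    have : ‖x₁ - x₂‖ * ‖x₁ - x₂‖ ≤ ‖u₁ - u₂‖ * ‖x₁ - x₂‖ := by nlinarith
    exact le_of_mul_le_mul_right this hpos

/-- polarization-type identity. -/
lemma inner_eq_half {Z : Type*} [NormedAddCommGroup Z] [InnerProductSpace ℝ Z] (a b : Z) :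
    ⟪a, b⟫ = 1 / 2 * (‖a‖ ^ 2 + ‖b‖ ^ 2 - ‖a - b‖ ^ 2) := by
  have := norm_sub_sq_real a b
  linarith

set_option maxHeartbeats 1000000 in
/-- the energy inequality
`E_{k+1}(z) + D_{k+1} ≤ E_k(z) + D_k − t_k Ψ_k(z) − ¼‖z^{k+1/2} − z^k‖²`
holds for all `k ≥ 1` (with `D₁ = 0`). -/
theorem optimistic_extragradient_energy_inequality
    (F₁ F₂ : Z → Z) (LF₁ LF₂ : ℝ) (g₁ g₂ : Z → EReal)
    (hF₁m : IsMonotoneOp F₁) (hF₂m : IsMonotoneOp F₂)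
    (hF₁L : IsLipOp LF₁ F₁) (hF₂L : IsLipOp LF₂ F₂)
    (hg₁ : ProperConvexLsc g₁) (hg₂ : ProperConvexLsc g₂)
    (hdom : (edom g₁ ∩ edom g₂).Nonempty)
    (σ t : ℕ → ℝ) (hσpos : ∀ k, 0 < σ k) (hσdec : Antitone σ) (htpos : ∀ k, 0 < t k)
    (hstep : ∀ k ≥ 1, 8 * t k ^ 2 * (LF₂ + σ k * LF₁) ^ 2 ≤ 1)
    (z w : ℕ → Z) (hinit : w 0 = z 1)
    (hw : ∀ k ≥ 1, IsProx (t k) (Gfun g₁ g₂ σ k)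
      (z k - t k • Vop F₁ F₂ σ k (w (k - 1))) (w k))
    (hz : ∀ k ≥ 1, IsProx (t k) (Gfun g₁ g₂ σ k)
      (z k - t k • Vop F₁ F₂ σ k (w k)) (z (k + 1)))
    (D : ℕ → ℝ) (hD1 : D 1 = 0)
    (hD : ∀ k ≥ 2, D k = t (k - 1) ^ 2 / 2 *
      ‖Vop F₁ F₂ σ (k - 1) (w (k - 2)) - Vop F₁ F₂ σ (k - 1) (w (k - 1))‖ ^ 2) :
    ∀ zz : Z, ∀ k ≥ 1,
      ((1 / 2 * ‖z (k + 1) - zz‖ ^ 2 + D (k + 1) : ℝ) : EReal) ≤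
        ((1 / 2 * ‖z k - zz‖ ^ 2 + D k : ℝ) : EReal)
        - (t k : EReal) * (((⟪Vop F₁ F₂ σ k (w k), w k - zz⟫ : ℝ) : EReal)
            + Gfun g₁ g₂ σ k (w k) - Gfun g₁ g₂ σ k zz)
        - ((1 / 4 * ‖w k - z k‖ ^ 2 : ℝ) : EReal) := by
  obtain ⟨v₀, hv₀1, hv₀2⟩ := hdom
  -- real values of g₁, g₂ at v₀
  obtain ⟨r₁, hr₁⟩ : ∃ r : ℝ, g₁ v₀ = (r : EReal) :=
    ⟨(g₁ v₀).toReal, (EReal.coe_toReal (ne_of_lt hv₀1) (hg₁.ne_bot v₀)).symm⟩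
  obtain ⟨r₂, hr₂⟩ : ∃ r : ℝ, g₂ v₀ = (r : EReal) :=
    ⟨(g₂ v₀).toReal, (EReal.coe_toReal (ne_of_lt hv₀2) (hg₂.ne_bot v₀)).symm⟩
  have hGv₀ : ∀ j, Gfun g₁ g₂ σ j v₀ = ((r₂ + σ j * r₁ : ℝ) : EReal) := by
    intro j
    rw [Gfun, hr₁, hr₂, ← EReal.coe_mul, ← EReal.coe_add]
  have hGnb : ∀ j v, Gfun g₁ g₂ σ j v ≠ ⊥ := by
    intro j v hc
    rcases EReal.add_eq_bot_iff.mp hc with h | h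
    · exact hg₂.ne_bot v h
    · by_cases ht : g₁ v = ⊤
      · rw [ht, EReal.coe_mul_top_of_pos (hσpos j)] at h
        exact (by simp : (⊤ : EReal) ≠ ⊥) h
      · obtain ⟨r, hr⟩ : ∃ r : ℝ, g₁ v = (r : EReal) :=
          ⟨(g₁ v).toReal, (EReal.coe_toReal ht (hg₁.ne_bot v)).symm⟩
        rw [hr, ← EReal.coe_mul] at h
        exact EReal.coe_ne_bot _ h
  -- real value of G_j at prox points
  have hreal : ∀ j, 1 ≤ j → ∀ u x : Z, IsProx (t j) (Gfun g₁ g₂ σ j) u x →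
      ∃ b : ℝ, Gfun g₁ g₂ σ j x = (b : EReal) := by
    intro j _ u x hp
    have hnt := isProx_ne_top (htpos j) (hGv₀ j) hp
    exact ⟨(Gfun g₁ g₂ σ j x).toReal, (EReal.coe_toReal hnt (hGnb j x)).symm⟩
  -- Lipschitz bound for V
  have hVL : ∀ j (a b : Z), ‖Vop F₁ F₂ σ j a - Vop F₁ F₂ σ j b‖
      ≤ (LF₂ + σ j * LF₁) * ‖a - b‖ := by
    intro j a b
    have hdiff : Vop F₁ F₂ σ j a - Vop F₁ F₂ σ j b
        = (F₂ a - F₂ b) + σ j • (F₁ a - F₁ b) := by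
      simp only [Vop, smul_sub]; abel
    rw [hdiff]
    calc ‖(F₂ a - F₂ b) + σ j • (F₁ a - F₁ b)‖
        ≤ ‖F₂ a - F₂ b‖ + ‖σ j • (F₁ a - F₁ b)‖ := norm_add_le _ _
      _ = ‖F₂ a - F₂ b‖ + σ j * ‖F₁ a - F₁ b‖ := by
          rw [norm_smul, Real.norm_eq_abs, abs_of_pos (hσpos j)]
      _ ≤ LF₂ * ‖a - b‖ + σ j * (LF₁ * ‖a - b‖) :=
          add_le_add (hF₂L a b) (mul_le_mul_of_nonneg_left (hF₁L a b) (hσpos j).le)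
      _ = (LF₂ + σ j * LF₁) * ‖a - b‖ := by ring
  intro zz k hk
  set τ := t k with hτdef
  have hτ : 0 < τ := htpos k
  have hwk := hw k hk
  have hzk := hz k hk
  rw [← hτdef] at hwk hzk
  obtain ⟨aw, haw⟩ := hreal k hk _ _ hwk
  obtain ⟨ay, hay⟩ := hreal k hk _ _ hzk
  -- Step: ‖w (k-1) - z k‖² ≤ 2 * D k and 0 ≤ D k
  have h3 : ‖w (k - 1) - z k‖ ^ 2 ≤ 2 * D k := by
    rcases Nat.lt_or_ge k 2 with hk2 | hk2
    · have hk1 : k = 1 := by omega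
      subst hk1
      simp only [Nat.sub_self, hinit, sub_self, norm_zero, hD1]
      norm_num
    · obtain ⟨j, rfl⟩ : ∃ j, k = j + 1 := ⟨k - 1, by omega⟩
      have hj : 1 ≤ j := by omega
      have hwj := hw j hj
      have hzj := hz j hj
      obtain ⟨bw, hbw⟩ := hreal j hj _ _ hwj
      obtain ⟨bz, hbz⟩ := hreal j hj _ _ hzj
      have hne := isProx_nonexpansive hwj hzj hbw hbz
      have hdiff : (z j - t j • Vop F₁ F₂ σ j (w (j - 1)))
          - (z j - t j • Vop F₁ F₂ σ j (w j))
          = t j • (Vop F₁ F₂ σ j (w j) - Vop F₁ F₂ σ j (w (j - 1))) := by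
        rw [smul_sub]; abel
      rw [hdiff, norm_smul, Real.norm_eq_abs, abs_of_pos (htpos j)] at hne
      have hDk : D (j + 1) = t j ^ 2 / 2 *
          ‖Vop F₁ F₂ σ j (w (j - 1)) - Vop F₁ F₂ σ j (w j)‖ ^ 2 := hD (j + 1) (by omega)
      have hsym : ‖Vop F₁ F₂ σ j (w j) - Vop F₁ F₂ σ j (w (j - 1))‖
          = ‖Vop F₁ F₂ σ j (w (j - 1)) - Vop F₁ F₂ σ j (w j)‖ := norm_sub_rev _ _
      rw [hsym] at hne
      have : ‖w j - z (j + 1)‖ ^ 2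
          ≤ (t j * ‖Vop F₁ F₂ σ j (w (j - 1)) - Vop F₁ F₂ σ j (w j)‖) ^ 2 := by
        have h0 := norm_nonneg (w j - z (j + 1))
        nlinarith [hne]
      show ‖w (j + 1 - 1) - z (j + 1)‖ ^ 2 ≤ 2 * D (j + 1)
      have hidx : j + 1 - 1 = j := rfl
      rw [hidx, hDk]
      nlinarith [this]
  have hDknn : 0 ≤ D k := by nlinarith [h3, sq_nonneg ‖w (k - 1) - z k‖]
  -- notation
  set x := z k
  set y := z (k + 1)
  set wk := w k
  set u := w (k - 1)
  set Vw := Vop F₁ F₂ σ k wk with hVwdef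
  set Vu := Vop F₁ F₂ σ k u with hVudef
  set L := LF₂ + σ k * LF₁ with hLdef
  have hD6 : D (k + 1) = τ ^ 2 / 2 * ‖Vw - Vu‖ ^ 2 := by
    have := hD (k + 1) (by omega)
    have hidx1 : k + 1 - 1 = k := rfl
    have hidx2 : k + 1 - 2 = k - 1 := rfl
    rw [hidx1, hidx2] at this
    rw [this, norm_sub_rev]
  -- prox inequalities in real form
  have h2' := isProx_real_ineq hwk haw hay
  -- expand h2'
  have h2exp : ⟪x - wk, y - wk⟫ - τ * ⟪Vu, y - wk⟫ ≤ τ * (ay - aw) := by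
    have h := h2'
    have hs : (x - τ • Vu) - wk = (x - wk) - τ • Vu := by abel
    rw [hs, inner_sub_left, real_inner_smul_left] at h
    linarith [h]
  -- inner product identities
  have I1 : ⟪x - y, zz - y⟫ = 1 / 2 * (‖x - y‖ ^ 2 + ‖y - zz‖ ^ 2 - ‖x - zz‖ ^ 2) := by
    rw [inner_eq_half]
    rw [show ‖zz - y‖ = ‖y - zz‖ from norm_sub_rev _ _,
      show (x - y) - (zz - y) = x - zz by abel]
  have I2 : ⟪x - wk, y - wk⟫
      = 1 / 2 * (‖wk - x‖ ^ 2 + ‖wk - y‖ ^ 2 - ‖x - y‖ ^ 2) := by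
    rw [inner_eq_half]
    rw [show ‖x - wk‖ = ‖wk - x‖ from norm_sub_rev _ _,
      show ‖y - wk‖ = ‖wk - y‖ from norm_sub_rev _ _,
      show (x - wk) - (y - wk) = x - y by abel]
  have I4 : ⟪Vw, zz - y⟫
      = -⟪Vw, wk - zz⟫ + ⟪Vw - Vu, wk - y⟫ - ⟪Vu, y - wk⟫ := by
    simp only [inner_sub_left, inner_sub_right]
    ring
  have I3 : τ * ⟪Vw - Vu, wk - y⟫
      ≤ τ ^ 2 / 2 * ‖Vw - Vu‖ ^ 2 + 1 / 2 * ‖wk - y‖ ^ 2 := by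
    have hcs := real_inner_le_norm (Vw - Vu) (wk - y)
    nlinarith [sq_nonneg (τ * ‖Vw - Vu‖ - ‖wk - y‖), norm_nonneg (Vw - Vu),
      norm_nonneg (wk - y), mul_le_mul_of_nonneg_left hcs hτ.le]
  -- key bound
  have hLip : ‖Vw - Vu‖ ≤ L * ‖wk - u‖ := hVL k wk u
  have hstep' : 8 * τ ^ 2 * L ^ 2 ≤ 1 := hstep k hk
  clear_value τ x y wk u Vw Vu L
  have htri : ‖wk - u‖ ≤ ‖wk - x‖ + ‖x - u‖ := by
    have := norm_add_le (wk - x) (x - u)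
    rwa [show (wk - x) + (x - u) = wk - u by abel] at this
  have hxu : ‖x - u‖ ^ 2 ≤ 2 * D k := by
    rw [show ‖x - u‖ = ‖u - x‖ from norm_sub_rev _ _]
    exact h3
  have hsq1 : ‖Vw - Vu‖ ^ 2 ≤ L ^ 2 * ‖wk - u‖ ^ 2 := by
    have h := mul_self_le_mul_self (norm_nonneg (Vw - Vu)) hLip
    calc ‖Vw - Vu‖ ^ 2 = ‖Vw - Vu‖ * ‖Vw - Vu‖ := sq ‖Vw - Vu‖
      _ ≤ (L * ‖wk - u‖) * (L * ‖wk - u‖) := h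
      _ = L ^ 2 * ‖wk - u‖ ^ 2 := by ring
  have hsq2 : ‖wk - u‖ ^ 2 ≤ 2 * ‖wk - x‖ ^ 2 + 2 * ‖x - u‖ ^ 2 := by
    nlinarith [htri, norm_nonneg (wk - u), norm_nonneg (wk - x), norm_nonneg (x - u),
      sq_nonneg (‖wk - x‖ - ‖x - u‖)]
  have K : τ ^ 2 * ‖Vw - Vu‖ ^ 2 ≤ D k + 1 / 4 * ‖wk - x‖ ^ 2 := by
    have e1 : τ ^ 2 * ‖Vw - Vu‖ ^ 2 ≤ τ ^ 2 * (L ^ 2 * ‖wk - u‖ ^ 2) :=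
      mul_le_mul_of_nonneg_left hsq1 (sq_nonneg τ)
    have e2 : τ ^ 2 * L ^ 2 * ‖wk - u‖ ^ 2 ≤ 1 / 8 * ‖wk - u‖ ^ 2 := by
      have h := mul_le_mul_of_nonneg_right hstep' (sq_nonneg ‖wk - u‖)
      rw [one_mul] at h
      linarith
    nlinarith [hsq2, hxu, hDknn, e1, e2]
  -- case split on G zz
  by_cases hzztop : Gfun g₁ g₂ σ k zz = ⊤
  · rw [haw, hzztop]
    have e0 : ((⟪Vw, wk - zz⟫ : ℝ) : EReal) + (aw : EReal) = ((⟪Vw, wk - zz⟫ + aw : ℝ) : EReal) :=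
      (EReal.coe_add _ _).symm
    rw [e0]
    rw [EReal.sub_top, EReal.mul_bot_of_pos (by exact_mod_cast hτ : (0 : EReal) < (τ : ℝ)),
      EReal.coe_sub_bot, EReal.top_sub_coe]
    exact le_top
  · obtain ⟨az, haz⟩ : ∃ c : ℝ, Gfun g₁ g₂ σ k zz = (c : EReal) :=
      ⟨(Gfun g₁ g₂ σ k zz).toReal, (EReal.coe_toReal hzztop (hGnb k zz)).symm⟩
    -- real prox inequality for h1 at zz
    have h1' := isProx_real_ineq hzk hay haz
    have h1exp : ⟪x - y, zz - y⟫ - τ * ⟪Vw, zz - y⟫ ≤ τ * (az - ay) := by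
      have h := h1'
      have hs : (x - τ • Vw) - y = (x - y) - τ • Vw := by abel
      rw [hs, inner_sub_left, real_inner_smul_left] at h
      linarith [h]
    have main : 1 / 2 * ‖y - zz‖ ^ 2 + D (k + 1)
        ≤ 1 / 2 * ‖x - zz‖ ^ 2 + D k - τ * (⟪Vw, wk - zz⟫ + aw - az)
          - 1 / 4 * ‖wk - x‖ ^ 2 := by
      rw [hD6]
      nlinarith [h1exp, h2exp, I1, I2, I4, I3, K]
    rw [haw, haz]
    have ecast : ((⟪Vw, wk - zz⟫ : ℝ) : EReal) + (aw : EReal) - (az : EReal)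
        = ((⟪Vw, wk - zz⟫ + aw - az : ℝ) : EReal) := by
      rw [EReal.coe_sub, EReal.coe_add]
    rw [ecast, ← EReal.coe_mul, ← EReal.coe_sub, ← EReal.coe_sub]
    exact_mod_cast main


end
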